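/- For a finite MDP, for every natural number n and every state s, the n-th value-iteration iterate starting from the reward equals the best n-stage value achievable from s: (T^[n] r)(s) = max over all lists π of decision rules of length n of V_π(s). (Correctness of value iteration: the n-th iterate is the maximum expected discounted value achievable in n steps; a single list of decision rules attains the maximum simultaneously for every state.) -/

import Mathlib

open Finset

/-- The Bellman backup operator of a finite MDP:
`(T V)(s) = max_{a} ( r(s) + γ · ∑_{s'} p s a s' · V(s') )`. -/
noncomputable def bellman {S A : Type*} [Fintype S] [Fintype A] [Nonempty A]
    (r : S → ℝ) (p : S → A → S → ℝ) (γ : ℝ) (V : S → ℝ) : S → ℝ :=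
  fun s => Finset.univ.sup' Finset.univ_nonempty
    (fun a => r s + γ * ∑ s', p s a s' * V s')

/-- The value `V_π` of a finite list `π` of decision rules:
`V_[](s) = r(s)` and `V_{d::π'}(s) = r(s) + γ · ∑_{s'} p s (d s) s' · V_{π'}(s')`. -/
noncomputable def listValue {S A : Type*} [Fintype S]
    (r : S → ℝ) (p : S → A → S → ℝ) (γ : ℝ) : List (S → A) → S → ℝ
  | [] => r
  | d :: π => fun s => r s + γ * ∑ s', p s (d s) s' * listValue r p γ π s'

/-- Correctness of value iteration for a finite MDP: for every `n`, the `n`-th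
Bellman iterate starting from the reward is, at every state, the maximum of
`V_π(s)` over all lists `π` of decision rules of length `n`; moreover a single
list attains the maximum simultaneously for every state. -/
theorem value_iteration_correct {S A : Type*}
    [Fintype S] [Nonempty S] [Fintype A] [Nonempty A]
    (r : S → ℝ) (p : S → A → S → ℝ)
    (hp0 : ∀ s a s', 0 ≤ p s a s') (hp1 : ∀ s a, ∑ s', p s a s' = 1)
    (γ : ℝ) (hγ0 : 0 ≤ γ) (hγ1 : γ < 1) (n : ℕ) :
    (∀ π : List (S → A), π.length = n →
        ∀ s, listValue r p γ π s ≤ (bellman r p γ)^[n] r s) ∧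
    (∃ π : List (S → A), π.length = n ∧
        ∀ s, listValue r p γ π s = (bellman r p γ)^[n] r s) := by
  induction n with
  | zero =>
    refine ⟨?_, [], rfl, fun s => rfl⟩
    intro π hπ s
    rw [List.length_eq_zero_iff] at hπ
    subst hπ
    simp [listValue]
  | succ n ih =>
    obtain ⟨hub, π₀, hlen, hπ₀⟩ := ih
    have key : ∀ (d : S → A) (π' : List (S → A)) (s : S),
        listValue r p γ (d :: π') s
          = r s + γ * ∑ s', p s (d s) s' * listValue r p γ π' s' := fun _ _ _ => rfl
    constructor
    · intro π hπ s
      match π with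
      | d :: π' =>
        simp only [List.length_cons, Nat.add_right_cancel_iff] at hπ
        rw [Function.iterate_succ_apply', key]
        have h2 : r s + γ * ∑ s', p s (d s) s' * listValue r p γ π' s'
            ≤ r s + γ * ∑ s', p s (d s) s' * (bellman r p γ)^[n] r s' := by
          refine add_le_add_right (mul_le_mul_of_nonneg_left ?_ hγ0) _
          exact Finset.sum_le_sum fun s' _ =>
            mul_le_mul_of_nonneg_left (hub π' hπ s') (hp0 s (d s) s')
        exact h2.trans (Finset.le_sup'
          (fun a => r s + γ * ∑ s', p s a s' * (bellman r p γ)^[n] r s')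
          (Finset.mem_univ (d s)))
    · have hch : ∀ s : S, ∃ a : A,
          (Finset.univ.sup' Finset.univ_nonempty
            (fun a => r s + γ * ∑ s', p s a s' * (bellman r p γ)^[n] r s'))
          = r s + γ * ∑ s', p s a s' * (bellman r p γ)^[n] r s' := by
        intro s
        obtain ⟨a, -, ha⟩ := Finset.exists_mem_eq_sup' (Finset.univ_nonempty)
          (fun a => r s + γ * ∑ s', p s a s' * (bellman r p γ)^[n] r s')
        exact ⟨a, ha⟩
      choose d hd using hch
      refine ⟨d :: π₀, by simp [hlen], fun s => ?_⟩
      rw [Function.iterate_succ_apply', key]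
      have : (∑ s', p s (d s) s' * listValue r p γ π₀ s')
          = ∑ s', p s (d s) s' * (bellman r p γ)^[n] r s' := by
        refine Finset.sum_congr rfl fun s' _ => by rw [hπ₀ s']
      rw [this]
      exact (hd s).symm
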